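/- Let d ≥ 9 be odd and suppose d ≤ ⌊√d⌋·⌈√d⌉. Let k₁ be the largest nonnegative integer k such that d ≤ (⌊√d⌋ − k)(⌈√d⌉ + k). Then there exists a set S ⊆ ℤ/dℤ × ℤ/dℤ of cardinality |S| = ⌊√d⌋ + ⌈√d⌉ + ⌈⌈(d−1)/4⌉ / (⌈√d⌉ + k₁)⌉ such that there is no unit vector α ∈ ℂ^d for which the vectors X^m Z^n α, (m,n) ∈ S, are pairwise orthogonal; that is, there exists a 1-LOCC indistinguishable set of that many generalized Bell states in d⊗d. -/

import Mathlib

set_option linter.unusedSectionVars false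
set_option linter.unnecessarySimpa false
set_option maxHeartbeats 8000000


open Complex

/-- `ω d = exp(2πi/d)`, the primitive `d`-th root of unity in `ℂ`. -/
noncomputable def ω (d : ℕ) : ℂ := Complex.exp (2 * Real.pi * Complex.I / d)

/-- The generalized Pauli operator `U_{m,n} = X^m Z^n` acting on `ℂ^d`
(coordinates indexed by `ZMod d`), where `X e_j = e_{j+1}` and `Z e_j = ω^j e_j`:
`(U_{m,n} α)_k = ω^{n (k-m)} α_{k-m}`. -/
noncomputable def pU (d : ℕ) [NeZero d] (m n : ZMod d) (α : ZMod d → ℂ) : ZMod d → ℂ :=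
  fun k => ω d ^ (n.val * (k - m).val) * α (k - m)

/-- The standard Hermitian inner product on `ℂ^d`. -/
noncomputable def ip (d : ℕ) [NeZero d] (α β : ZMod d → ℂ) : ℂ :=
  ∑ j : ZMod d, (starRingEnd ℂ) (α j) * β j

namespace Stmt10Aux


noncomputable def ee (d : ℕ) [NeZero d] (c : ZMod d) : ℂ := ω d ^ c.val

variable {d : ℕ} [NeZero d]

lemma omega_form : ω d = Complex.exp (((2 * Real.pi / d : ℝ) : ℂ) * Complex.I) := by
  unfold ω; congr 1; push_cast; ring

lemma omega_pow (v : ℕ) : ω d ^ v = Complex.exp (((2 * Real.pi * v / d : ℝ) : ℂ) * Complex.I) := by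
  rw [omega_form, ← Complex.exp_nat_mul]
  congr 1; push_cast; ring

lemma omega_pow_d : ω d ^ d = 1 := by
  rw [omega_pow]
  have hd : (d : ℝ) ≠ 0 := Nat.cast_ne_zero.mpr (NeZero.ne d)
  rw [show (2 * Real.pi * d / d : ℝ) = 2 * Real.pi by field_simp]
  simpa using Complex.exp_int_mul_two_pi_mul_I 1

lemma hprim : IsPrimitiveRoot (ω d) d := by
  have := Complex.isPrimitiveRoot_exp d (NeZero.ne d)
  exact this

lemma ee_nat (v : ℕ) : ee d (v : ZMod d) = ω d ^ v := by
  unfold ee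
  rw [ZMod.val_natCast]
  conv_rhs => rw [← Nat.div_add_mod v d]
  rw [pow_add, pow_mul, omega_pow_d, one_pow, one_mul]

lemma valcast (c : ZMod d) : ((c.val : ℕ) : ZMod d) = c := ZMod.natCast_rightInverse c

lemma ee_add (u v : ZMod d) : ee d (u + v) = ee d u * ee d v := by
  have h1 : ee d (u + v) = ω d ^ (u.val + v.val) := by
    have : ((u.val + v.val : ℕ) : ZMod d) = u + v := by
      push_cast [valcast]; ring
    rw [← this, ee_nat]
  rw [h1, pow_add]; rfl

lemma ee_zero : ee d (0 : ZMod d) = 1 := by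
  unfold ee; rw [ZMod.val_zero, pow_zero]

lemma ee_ne_zero (u : ZMod d) : ee d u ≠ 0 := by
  unfold ee
  exact pow_ne_zero _ (by rw [omega_form]; exact Complex.exp_ne_zero _)

lemma ee_conj (u : ZMod d) : (starRingEnd ℂ) (ee d u) = ee d (-u) := by
  have h1 : ee d u * ee d (-u) = 1 := by rw [← ee_add, add_neg_cancel, ee_zero]
  have h2 : (starRingEnd ℂ) (ee d u) * ee d u = 1 := by
    rw [mul_comm, Complex.mul_conj]
    have : ‖ee d u‖ = 1 := by
      unfold ee
      rw [omega_pow, Complex.norm_exp_ofReal_mul_I]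
    rw [Complex.normSq_eq_norm_sq, this]; norm_num
  calc (starRingEnd ℂ) (ee d u) = (starRingEnd ℂ) (ee d u) * (ee d u * ee d (-u)) := by
        rw [h1, mul_one]
    _ = ((starRingEnd ℂ) (ee d u) * ee d u) * ee d (-u) := by ring
    _ = ee d (-u) := by rw [h2, one_mul]

lemma ee_ne_one {u : ZMod d} (hu : u ≠ 0) : ee d u ≠ 1 := by
  unfold ee
  have h1 : 0 < u.val := by
    rcases Nat.eq_zero_or_pos u.val with h | h
    · exact absurd ((ZMod.val_eq_zero u).mp h) hu
    · exact h
  exact hprim.pow_ne_one_of_pos_of_lt h1.ne' (ZMod.val_lt u)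

lemma sum_ee (u : ZMod d) :
    (∑ j : ZMod d, ee d (u * j)) = if u = 0 then (d : ℂ) else 0 := by
  split_ifs with h
  · subst h
    simp only [zero_mul, ee_zero]
    rw [Finset.sum_const, Finset.card_univ, ZMod.card, nsmul_eq_mul, mul_one]
  · have key : ee d u * (∑ j : ZMod d, ee d (u * j)) = ∑ j : ZMod d, ee d (u * j) := by
      rw [Finset.mul_sum]
      have h1 : ∀ j : ZMod d, ee d u * ee d (u * j) = ee d (u * (j + 1)) := by
        intro j
        rw [← ee_add]; congr 1; ring
      simp_rw [h1]
      exact Fintype.sum_equiv (Equiv.addRight (1 : ZMod d))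
        (fun j => ee d (u * (j + 1))) (fun j => ee d (u * j)) (fun j => rfl)
    have h2 : (ee d u - 1) * (∑ j : ZMod d, ee d (u * j)) = 0 := by
      rw [sub_mul, one_mul, key, sub_self]
    rcases mul_eq_zero.mp h2 with h3 | h3
    · exact absurd (sub_eq_zero.mp h3) (ee_ne_one h)
    · exact h3

lemma ee_re (u : ZMod d) : (ee d u).re = Real.cos (2 * Real.pi * u.val / d) := by
  unfold ee
  rw [omega_pow, Complex.exp_ofReal_mul_I_re]

/-- The key Parseval-type identity. -/
lemma sumFFe (f : ZMod d → ℂ) (w : ZMod d) :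
    (∑ c : ZMod d, (∑ k : ZMod d, f k * ee d (c * k)) *
        (starRingEnd ℂ) (∑ l : ZMod d, f l * ee d (c * l)) * ee d (c * w))
      = (d : ℂ) * ∑ k : ZMod d, f k * (starRingEnd ℂ) (f (k + w)) := by
  have step1 : ∀ c : ZMod d,
      (∑ k : ZMod d, f k * ee d (c * k)) *
        (starRingEnd ℂ) (∑ l : ZMod d, f l * ee d (c * l)) * ee d (c * w)
      = ∑ k : ZMod d, ∑ l : ZMod d,
          f k * (starRingEnd ℂ) (f l) * ee d (((k + w) - l) * c) := by
    intro c
    rw [map_sum, Finset.sum_mul_sum, Finset.sum_mul]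
    apply Finset.sum_congr rfl; intro k _
    rw [Finset.sum_mul]
    apply Finset.sum_congr rfl; intro l _
    rw [map_mul, ee_conj]
    have : ee d (c * k) * ee d (-(c * l)) * ee d (c * w) = ee d (((k + w) - l) * c) := by
      rw [← ee_add, ← ee_add]; congr 1; ring
    calc f k * ee d (c * k) * ((starRingEnd ℂ) (f l) * ee d (-(c * l))) * ee d (c * w)
        = f k * (starRingEnd ℂ) (f l) * (ee d (c * k) * ee d (-(c * l)) * ee d (c * w)) := by ring
      _ = f k * (starRingEnd ℂ) (f l) * ee d (((k + w) - l) * c) := by rw [this]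
  simp_rw [step1]
  rw [Finset.sum_comm]
  have step2 : ∀ k : ZMod d,
      (∑ c : ZMod d, ∑ l : ZMod d, f k * (starRingEnd ℂ) (f l) * ee d (((k + w) - l) * c))
      = (d : ℂ) * (f k * (starRingEnd ℂ) (f (k + w))) := by
    intro k
    rw [Finset.sum_comm]
    have h1 : ∀ l : ZMod d,
        (∑ c : ZMod d, f k * (starRingEnd ℂ) (f l) * ee d (((k + w) - l) * c))
        = f k * (starRingEnd ℂ) (f l) * (if (k + w) - l = 0 then (d : ℂ) else 0) := by
      intro l
      rw [← Finset.mul_sum, sum_ee]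
    simp_rw [h1, sub_eq_zero, mul_ite, mul_zero]
    rw [Finset.sum_ite_eq Finset.univ (k + w)
      (fun l => f k * (starRingEnd ℂ) (f l) * (d : ℂ))]
    simp [mul_comm]
  simp_rw [step2]
  rw [← Finset.mul_sum]



noncomputable def BhF (α : ZMod d → ℂ) (c : ZMod d) : ℂ :=
  ∑ j : ZMod d, ((starRingEnd ℂ) (α j) * α j) * ee d (c * j)

noncomputable def GfF (α : ZMod d → ℂ) (c : ZMod d) : ℂ :=
  ∑ j : ZMod d, ((starRingEnd ℂ) (α j) * α (j - 1)) * ee d (c * j)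

lemma pow_val_eq (x j : ZMod d) : ω d ^ (x.val * j.val) = ee d (x * j) := by
  rw [show ω d ^ (x.val * j.val) = ee d ((x.val * j.val : ℕ) : ZMod d) from (ee_nat _).symm]
  congr 1
  push_cast [valcast]
  ring

lemma ipA (α : ZMod d → ℂ) (x y : ZMod d) :
    ip d (pU d 0 x α) (pU d 0 y α) = BhF α (y - x) := by
  unfold ip pU BhF
  apply Finset.sum_congr rfl
  intro j _
  simp only [sub_zero]
  rw [map_mul, pow_val_eq, pow_val_eq, ee_conj]
  have hcomb : ee d (-(x * j)) * ee d (y * j) = ee d ((y - x) * j) := by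
    rw [← ee_add]; congr 1; ring
  calc ee d (-(x * j)) * (starRingEnd ℂ) (α j) * (ee d (y * j) * α j)
      = ((starRingEnd ℂ) (α j) * α j) * (ee d (-(x * j)) * ee d (y * j)) := by ring
    _ = ((starRingEnd ℂ) (α j) * α j) * ee d ((y - x) * j) := by rw [hcomb]

lemma ipB (α : ZMod d → ℂ) (x y : ZMod d) :
    ip d (pU d 0 x α) (pU d 1 y α) = ee d (-y) * GfF α (y - x) := by
  unfold ip pU GfF
  rw [Finset.mul_sum]
  apply Finset.sum_congr rfl
  intro j _
  simp only [sub_zero]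
  rw [map_mul, pow_val_eq, pow_val_eq, ee_conj]
  have hcomb : ee d (-(x * j)) * ee d (y * (j - 1)) = ee d (-y) * ee d ((y - x) * j) := by
    rw [← ee_add, ← ee_add]; congr 1; ring
  calc ee d (-(x * j)) * (starRingEnd ℂ) (α j) * (ee d (y * (j - 1)) * α (j - 1))
      = (ee d (-(x * j)) * ee d (y * (j - 1))) * ((starRingEnd ℂ) (α j) * α (j - 1)) := by ring
    _ = (ee d (-y) * ee d ((y - x) * j)) * ((starRingEnd ℂ) (α j) * α (j - 1)) := by rw [hcomb]
    _ = ee d (-y) * ((starRingEnd ℂ) (α j) * α (j - 1) * ee d ((y - x) * j)) := by ring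

lemma Bh_zero (α : ZMod d → ℂ) : BhF α 0 = ip d α α := by
  unfold BhF ip
  apply Finset.sum_congr rfl
  intro j _
  rw [zero_mul, ee_zero, mul_one]

lemma Bh_neg (α : ZMod d → ℂ) (c : ZMod d) :
    (starRingEnd ℂ) (BhF α (-c)) = BhF α c := by
  unfold BhF
  rw [map_sum]
  apply Finset.sum_congr rfl
  intro j _
  rw [map_mul, map_mul, ee_conj, Complex.conj_conj]
  have : -(-c * j) = c * j := by ring
  rw [this]
  ring

lemma gg_zero (α : ZMod d → ℂ) (h : ∀ c, GfF α c = 0) :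
    ∀ k : ZMod d, (starRingEnd ℂ) (α k) * α (k - 1) = 0 := by
  have hP := sumFFe (fun j => (starRingEnd ℂ) (α j) * α (j - 1)) 0
  have hL : (∑ c : ZMod d, (∑ k : ZMod d, ((starRingEnd ℂ) (α k) * α (k - 1)) * ee d (c * k)) *
      (starRingEnd ℂ) (∑ l : ZMod d, ((starRingEnd ℂ) (α l) * α (l - 1)) * ee d (c * l)) *
      ee d (c * 0)) = 0 := by
    apply Finset.sum_eq_zero
    intro c _
    have hc : GfF α c = 0 := h c
    unfold GfF at hc
    rw [hc, zero_mul, zero_mul]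
  rw [hL] at hP
  have hd0 : (d : ℂ) ≠ 0 := Nat.cast_ne_zero.mpr (NeZero.ne d)
  have hsum : (∑ k : ZMod d, ((starRingEnd ℂ) (α k) * α (k - 1)) *
      (starRingEnd ℂ) ((starRingEnd ℂ) (α (k + 0)) * α (k + 0 - 1))) = 0 := by
    rcases mul_eq_zero.mp hP.symm with h' | h'
    · exact absurd h' hd0
    · exact h'
  simp only [add_zero] at hsum
  have hsum2 : (∑ k : ZMod d, (Complex.normSq ((starRingEnd ℂ) (α k) * α (k - 1)) : ℂ)) = 0 := by
    rw [← hsum]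
    apply Finset.sum_congr rfl
    intro k _
    rw [Complex.mul_conj]
  have hsum3 : (∑ k : ZMod d, Complex.normSq ((starRingEnd ℂ) (α k) * α (k - 1))) = 0 := by
    have := hsum2
    push_cast at this
    exact_mod_cast this
  intro k
  have := (Finset.sum_eq_zero_iff_of_nonneg
    (fun k _ => Complex.normSq_nonneg _)).mp hsum3 k (Finset.mem_univ k)
  exact Complex.normSq_eq_zero.mp this

lemma final_contra (α : ZMod d → ℂ) (h1 : ip d α α = 1)
    (hgz : ∀ k : ZMod d, (starRingEnd ℂ) (α k) * α (k - 1) = 0)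
    (hBz : ∀ c : ZMod d, (ee d (-c)).re < 0 → BhF α c = 0) : False := by
  have hP := sumFFe (fun j => (starRingEnd ℂ) (α j) * α j) (-1)
  have hR : (∑ k : ZMod d, ((starRingEnd ℂ) (α k) * α k) *
      (starRingEnd ℂ) ((starRingEnd ℂ) (α (k + -1)) * α (k + -1))) = 0 := by
    apply Finset.sum_eq_zero
    intro k _
    have hk : (starRingEnd ℂ) (α k) * α (k - 1) = 0 := hgz k
    have : k + -1 = k - 1 := by ring
    rw [this, map_mul, Complex.conj_conj]
    calc (starRingEnd ℂ) (α k) * α k * (α (k - 1) * (starRingEnd ℂ) (α (k - 1)))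
        = ((starRingEnd ℂ) (α k) * α (k - 1)) * (α k * (starRingEnd ℂ) (α (k - 1))) := by ring
      _ = 0 := by rw [hk, zero_mul]
  rw [hR, mul_zero] at hP
  -- hP : ∑ c, BhF α c * conj (BhF α c) * ee d (c * -1) = 0
  have hP2 : (∑ c : ZMod d, (Complex.normSq (BhF α c) : ℂ) * ee d (-c)) = 0 := by
    rw [← hP]
    apply Finset.sum_congr rfl
    intro c _
    have h1' : c * (-1) = -c := by ring
    rw [h1']
    congr 1
    rw [← Complex.mul_conj]
    rfl
  have hre : (∑ c : ZMod d, Complex.normSq (BhF α c) * (ee d (-c)).re) = 0 := by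
    have := congrArg Complex.re hP2
    rwa [Complex.re_sum, Finset.sum_congr rfl
      (fun c _ => Complex.re_ofReal_mul _ _), Complex.zero_re] at this
  rw [← Finset.add_sum_erase Finset.univ _ (Finset.mem_univ (0 : ZMod d))] at hre
  have hzero_term : Complex.normSq (BhF α 0) * (ee d (-(0 : ZMod d))).re = 1 := by
    rw [Bh_zero, h1, neg_zero, ee_zero]
    simp
  rw [hzero_term] at hre
  have hrest : (0 : ℝ) ≤ ∑ c ∈ Finset.univ.erase (0 : ZMod d),
      Complex.normSq (BhF α c) * (ee d (-c)).re := by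
    apply Finset.sum_nonneg
    intro c _
    rcases lt_or_ge ((ee d (-c)).re) 0 with hlt | hge
    · rw [hBz c hlt]
      simp
    · exact mul_nonneg (Complex.normSq_nonneg _) hge
  linarith


lemma cos_bound (hd1 : 1 ≤ d) {m : ℕ} (hm : m ≤ d / 4) :
    0 ≤ Real.cos (2 * Real.pi * m / d) := by
  have hd0 : (0 : ℝ) < d := by exact_mod_cast hd1
  have hπ := Real.pi_pos
  have h1 : ((d / 4 : ℕ) : ℝ) ≤ (d : ℝ) / 4 := Nat.cast_div_le
  have h2 : (m : ℝ) ≤ (d : ℝ) / 4 := le_trans (by exact_mod_cast hm) h1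
  apply Real.cos_nonneg_of_mem_Icc
  constructor
  · have : (0 : ℝ) ≤ 2 * Real.pi * m / d := by positivity
    linarith
  · rw [div_le_iff₀ hd0]
    nlinarith

lemma cos_flip (hd1 : 1 ≤ d) {r : ℕ} (hr : r ≤ d) :
    Real.cos (2 * Real.pi * ((d - r : ℕ) : ℝ) / d) = Real.cos (2 * Real.pi * r / d) := by
  have hd0 : (d : ℝ) ≠ 0 := by positivity
  have hcast : ((d - r : ℕ) : ℝ) = (d : ℝ) - r := by
    push_cast [Nat.cast_sub hr]; ring
  have harg : 2 * Real.pi * ((d - r : ℕ) : ℝ) / d = 2 * Real.pi - 2 * Real.pi * r / d := by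
    rw [hcast]; field_simp
  rw [harg, Real.cos_sub, Real.cos_two_pi, Real.sin_two_pi]
  ring

lemma val_range_of_re_neg (hd9 : 9 ≤ d) (c : ZMod d) (h : (ee d (-c)).re < 0) :
    d / 4 + 1 ≤ c.val ∧ c.val + d / 4 + 1 ≤ d := by
  have hc0 : c ≠ 0 := by
    rintro rfl
    rw [neg_zero, ee_zero] at h
    norm_num at h
  have hneg : (-c).val = d - c.val := by
    rw [ZMod.neg_val]
    simp [hc0]
  have hre : Real.cos (2 * Real.pi * ((d - c.val : ℕ) : ℝ) / d) < 0 := by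
    rw [ee_re, hneg] at h
    exact h
  have hvlt : c.val < d := ZMod.val_lt c
  have hvpos : 0 < c.val := by
    rcases Nat.eq_zero_or_pos c.val with h0 | h0
    · exact absurd ((ZMod.val_eq_zero c).mp h0) hc0
    · exact h0
  constructor
  · by_contra hcon
    push_neg at hcon
    have hsmall : c.val ≤ d / 4 := by omega
    have := cos_bound (d := d) (by omega) hsmall
    rw [← cos_flip (by omega) (le_of_lt hvlt)] at this
    linarith
  · by_contra hcon
    push_neg at hcon
    have hsmall : d - c.val ≤ d / 4 := by omega
    have := cos_bound (d := d) (by omega) hsmall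
    linarith


end Stmt10Aux


open Stmt10Aux

/-- (Theorem 3 of the paper, first case.) Let `d ≥ 9` be odd with
`d ≤ ⌊√d⌋⌈√d⌉`, and let `k₁` be the largest `k ≥ 0` with
`d ≤ (⌊√d⌋ - k)(⌈√d⌉ + k)`. Then there exists a 1-LOCC indistinguishable set of
`⌊√d⌋ + ⌈√d⌉ + ⌈⌈(d-1)/4⌉ / (⌈√d⌉ + k₁)⌉` generalized Bell states in `d ⊗ d`. -/
theorem stmt_10 (d : ℕ) [NeZero d] (hd : 9 ≤ d) (hodd : Odd d)
    (hle : d ≤ ⌊Real.sqrt d⌋₊ * ⌈Real.sqrt d⌉₊)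
    (k₁ : ℕ)
    (hk₁ : IsGreatest {k : ℕ |
      (d : ℤ) ≤ ((⌊Real.sqrt d⌋₊ : ℤ) - (k : ℤ)) * ((⌈Real.sqrt d⌉₊ : ℤ) + (k : ℤ))} k₁) :
    ∃ S : Finset (ZMod d × ZMod d),
      S.card = ⌊Real.sqrt d⌋₊ + ⌈Real.sqrt d⌉₊ +
          ⌈(⌈((d : ℚ) - 1) / 4⌉₊ : ℚ) / ((⌈Real.sqrt d⌉₊ : ℚ) + (k₁ : ℚ))⌉₊ ∧
      ¬ ∃ α : ZMod d → ℂ, ip d α α = 1 ∧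
        ∀ p ∈ S, ∀ q ∈ S, p ≠ q → ip d (pU d p.1 p.2 α) (pU d q.1 q.2 α) = 0 := by
  haveI hfact : Fact (1 < d) := ⟨by omega⟩
  classical
  set a := ⌊Real.sqrt d⌋₊ with ha
  set b := ⌈Real.sqrt d⌉₊ with hbdef
  -- basic facts about a, b
  have ha3 : 3 ≤ a := by
    have h9 : Real.sqrt 9 ≤ Real.sqrt d := Real.sqrt_le_sqrt (by exact_mod_cast hd)
    have h3 : (3 : ℝ) ≤ Real.sqrt d := by
      rwa [show (9 : ℝ) = 3 ^ 2 by norm_num, Real.sqrt_sq (by norm_num : (0:ℝ) ≤ 3)] at h9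
    rw [ha]; exact Nat.le_floor (by exact_mod_cast h3)
  have haa : a * a ≤ d := by
    have h1 : (a : ℝ) ≤ Real.sqrt d := by rw [ha]; exact Nat.floor_le (Real.sqrt_nonneg _)
    have h2 : (a : ℝ) * a ≤ Real.sqrt d * Real.sqrt d :=
      mul_le_mul h1 h1 (by positivity) (Real.sqrt_nonneg _)
    rw [Real.mul_self_sqrt (by positivity)] at h2
    exact_mod_cast h2
  have hab : a ≤ b := Nat.floor_le_ceil _
  have hba : b ≤ a + 1 := by
    have h1 : Real.sqrt d < a + 1 := by rw [ha]; exact Nat.lt_floor_add_one _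
    rw [hbdef]; exact Nat.ceil_le.mpr (by push_cast; linarith)
  have hb3 : 3 ≤ b := le_trans ha3 hab
  have hk1top : (d : ℤ) ≤ ((a : ℤ) - (k₁ : ℤ)) * ((b : ℤ) + (k₁ : ℤ)) := hk₁.1
  have haaZ : (a : ℤ) * a ≤ d := by exact_mod_cast haa
  have ha3Z : (3 : ℤ) ≤ (a : ℤ) := by exact_mod_cast ha3
  have hbaZ : (b : ℤ) ≤ (a : ℤ) + 1 := by exact_mod_cast hba
  have hd9Z : (9 : ℤ) ≤ (d : ℤ) := by exact_mod_cast hd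
  have hk1a : k₁ + 2 ≤ a := by
    by_contra hcon
    push_neg at hcon
    have hconZ : (a : ℤ) ≤ (k₁ : ℤ) + 1 := by exact_mod_cast (by omega : a ≤ k₁ + 1)
    rcases lt_or_ge (k₁ : ℤ) (a : ℤ) with hlt | hge
    · have he : (a : ℤ) - (k₁ : ℤ) = 1 := by omega
      rw [he, one_mul] at hk1top
      nlinarith
    · have hnp : ((a : ℤ) - (k₁ : ℤ)) * ((b : ℤ) + (k₁ : ℤ)) ≤ 0 := by
        apply mul_nonpos_of_nonpos_of_nonneg
        · omega
        · positivity
      linarith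
  -- A' and B
  obtain ⟨A', hA'eq, hA2⟩ : ∃ A'', a = A'' + k₁ ∧ 2 ≤ A'' := ⟨a - k₁, by omega, by omega⟩
  set B := b + k₁ with hBdef
  have hBpos : 0 < B := by omega
  have hdAB : d ≤ A' * B := by
    have h1 : (d : ℤ) ≤ (A' : ℤ) * (B : ℤ) := by
      have e1 : ((a : ℤ) - (k₁ : ℤ)) = (A' : ℤ) := by
        have : (a : ℤ) = (A' : ℤ) + (k₁ : ℤ) := by exact_mod_cast hA'eq
        omega
      have e2 : ((b : ℤ) + (k₁ : ℤ)) = (B : ℤ) := by push_cast [hBdef]; ring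
      rw [← e1, ← e2]; exact hk1top
    exact_mod_cast h1
  obtain ⟨P, hPdef⟩ : ∃ P, A' = P + 2 := ⟨A' - 2, by omega⟩
  have hUB : (P + 1) * B + 2 ≤ d := by
    have hnot : ¬ (d : ℤ) ≤ ((a : ℤ) - ((k₁ + 1 : ℕ) : ℤ)) * ((b : ℤ) + ((k₁ + 1 : ℕ) : ℤ)) := by
      intro hmem
      have h2 := hk₁.2 hmem
      omega
    push_neg at hnot
    have h2 : ((P + 1 : ℕ) : ℤ) * ((B + 1 : ℕ) : ℤ) < d := by
      have e1 : ((P + 1 : ℕ) : ℤ) = (a : ℤ) - ((k₁ + 1 : ℕ) : ℤ) := by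
        have : (a : ℤ) = (A' : ℤ) + (k₁ : ℤ) := by exact_mod_cast hA'eq
        have : (A' : ℤ) = (P : ℤ) + 2 := by exact_mod_cast hPdef
        push_cast
        omega
      have e2 : ((B + 1 : ℕ) : ℤ) = (b : ℤ) + ((k₁ + 1 : ℕ) : ℤ) := by push_cast [hBdef]; ring
      rw [e1, e2]; exact hnot
    have h3 : (P + 1) * (B + 1) < d := by exact_mod_cast h2
    have h4 : (P + 1) * (B + 1) = (P + 1) * B + (P + 1) := by ring
    generalize hX : (P + 1) * B = X at h3 h4 ⊢
    omega
  -- M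
  set M := ⌈((d : ℚ) - 1) / 4⌉₊ with hMdef
  have hM1 : d ≤ 4 * M + 1 := by
    have h1 := Nat.le_ceil (((d : ℚ) - 1) / 4)
    rw [div_le_iff₀ (by norm_num : (0:ℚ) < 4)] at h1
    rw [← hMdef] at h1
    have h2 : (d : ℚ) ≤ 4 * (M : ℚ) + 1 := by linarith
    exact_mod_cast h2
  have hM2 : 4 * M ≤ d + 2 := by
    have hd1 : (1 : ℚ) ≤ (d : ℚ) := by exact_mod_cast (by omega : 1 ≤ d)
    have h0 : (0 : ℚ) ≤ ((d : ℚ) - 1) / 4 := by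
      apply div_nonneg (by linarith) (by norm_num)
    have h1 := Nat.ceil_lt_add_one h0
    rw [← hMdef] at h1
    have h2 := mul_lt_mul_of_pos_right h1 (by norm_num : (0:ℚ) < 4)
    rw [add_mul, div_mul_cancel₀ _ (by norm_num : (4:ℚ) ≠ 0), one_mul] at h2
    have h3 : (M : ℚ) * 4 < (d : ℚ) + 3 := by linarith
    have h4 : M * 4 < d + 3 := by exact_mod_cast h3
    omega
  have hModd : d % 2 = 1 := Nat.odd_iff.mp hodd
  have hMd4 : M + d / 4 = (d - 1) / 2 := by omega
  have hM0 : 1 ≤ M := by omega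
  -- t
  set t := ⌈(M : ℚ) / ((b : ℚ) + (k₁ : ℚ))⌉₊ with htdef
  have hBQ : ((b : ℚ) + (k₁ : ℚ)) = ((B : ℕ) : ℚ) := by push_cast [hBdef]; ring
  have hBQpos : (0 : ℚ) < (b : ℚ) + (k₁ : ℚ) := by positivity
  have ht1 : M ≤ t * B := by
    have h1 := Nat.le_ceil ((M : ℚ) / ((b : ℚ) + (k₁ : ℚ)))
    rw [div_le_iff₀ hBQpos] at h1
    rw [← htdef, hBQ] at h1
    exact_mod_cast h1
  have ht2 : t * B < M + B := by
    have h0 : (0 : ℚ) ≤ (M : ℚ) / ((b : ℚ) + (k₁ : ℚ)) := by positivity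
    have h1 := Nat.ceil_lt_add_one h0
    rw [← htdef] at h1
    have h2 := mul_lt_mul_of_pos_right h1 hBQpos
    rw [add_mul, div_mul_cancel₀ _ (ne_of_gt hBQpos), one_mul] at h2
    rw [hBQ] at h2
    have h3 : (t : ℚ) * (B : ℚ) < (M : ℚ) + (B : ℚ) := h2
    exact_mod_cast h3
  have h4a : 4 * a ≤ a * a + 3 := by
    have hq : a * a + 3 = (a - 3) * a + 3 * a + 3 := by
      have : a - 3 + 3 = a := by omega
      calc a * a + 3 = (a - 3 + 3) * a + 3 := by rw [this]
        _ = (a - 3) * a + 3 * a + 3 := by ring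
    have h0 : a ≤ (a - 3) * a + 3 := by
      rcases Nat.eq_or_lt_of_le ha3 with h | h
      · omega
      · have h1 : 1 * a ≤ (a - 3) * a := Nat.mul_le_mul_right _ (by omega)
        omega
    omega
  have hB2 : 2 * B ≤ d + 1 := by
    rw [hBdef]
    linarith [h4a, haa, hba, hk1a]
  -- the Finset Q of level-0 phases
  set Q : Finset ℕ := Finset.range B ∪ (Finset.range t).image (fun l => d / 4 + (l + 1) * B)
    with hQdef
  have hQext : ∀ l, l < t → d / 4 + (l + 1) * B + 1 ≤ d := by
    intro l hl
    have hmul : (l + 1) * B ≤ t * B := Nat.mul_le_mul_right _ (by omega)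
    have h1 : (l + 1) * B < M + B := lt_of_le_of_lt hmul ht2
    generalize hX : (l + 1) * B = X at h1 ⊢
    omega
  have hQlt : ∀ x ∈ Q, x < d := by
    intro x hx
    rw [hQdef] at hx
    rcases Finset.mem_union.mp hx with h | h
    · have := Finset.mem_range.mp h; omega
    · obtain ⟨l, hl, rfl⟩ := Finset.mem_image.mp h
      have := hQext l (Finset.mem_range.mp hl)
      omega
  have hQge : ∀ l : ℕ, B ≤ d / 4 + (l + 1) * B := by
    intro l
    have h1 : B ≤ (l + 1) * B := Nat.le_mul_of_pos_left _ (by omega)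
    omega
  have hQcard : Q.card = B + t := by
    rw [hQdef, Finset.card_union_of_disjoint, Finset.card_range,
      Finset.card_image_of_injective, Finset.card_range]
    · intro l1 l2 hl
      simp only at hl
      have h1 : (l1 + 1) * B = (l2 + 1) * B := by omega
      have h2 := Nat.eq_of_mul_eq_mul_right hBpos h1
      omega
    · rw [Finset.disjoint_left]
      intro x hx hx2
      obtain ⟨l, hl, rfl⟩ := Finset.mem_image.mp hx2
      have h1 := Finset.mem_range.mp hx
      have h2 := hQge l
      omega
  -- the set S
  set S : Finset (ZMod d × ZMod d) :=
    Q.image (fun x : ℕ => ((0 : ZMod d), (x : ZMod d))) ∪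
      (Finset.range A').image (fun j : ℕ => ((1 : ZMod d), ((j * B : ℕ) : ZMod d))) with hSdef
  have hzero_ne_one : (0 : ZMod d) ≠ 1 := zero_ne_one
  have hjB : ∀ j, j < A' → j * B < d := by
    intro j hj
    have h1 : j * B ≤ (P + 1) * B := Nat.mul_le_mul_right _ (by omega)
    generalize hX : (P + 1) * B = X at h1 hUB
    generalize hY : j * B = Y at h1 ⊢
    omega
  refine ⟨S, ?_, ?_⟩
  · -- cardinality
    have hinj1 : Set.InjOn (fun x : ℕ => ((0 : ZMod d), (x : ZMod d))) ↑Q := by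
      intro x hx y hy he
      simp only [Prod.mk.injEq, true_and] at he
      have hv := congrArg ZMod.val he
      rwa [ZMod.val_cast_of_lt (hQlt x (Finset.mem_coe.mp hx)),
        ZMod.val_cast_of_lt (hQlt y (Finset.mem_coe.mp hy))] at hv
    have hinj2 : Set.InjOn (fun j : ℕ => ((1 : ZMod d), ((j * B : ℕ) : ZMod d)))
        ↑(Finset.range A') := by
      intro j1 hj1 j2 hj2 he
      simp only [Finset.coe_range, Set.mem_Iio] at hj1 hj2
      simp only [Prod.mk.injEq, true_and] at he
      have hv := congrArg ZMod.val he
      rw [ZMod.val_cast_of_lt (hjB j1 hj1), ZMod.val_cast_of_lt (hjB j2 hj2)] at hv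
      exact Nat.eq_of_mul_eq_mul_right hBpos hv
    have hdisj : Disjoint (Q.image (fun x : ℕ => ((0 : ZMod d), (x : ZMod d))))
        ((Finset.range A').image (fun j : ℕ => ((1 : ZMod d), ((j * B : ℕ) : ZMod d)))) := by
      rw [Finset.disjoint_left]
      rintro p hp hq
      obtain ⟨x, _, rfl⟩ := Finset.mem_image.mp hp
      obtain ⟨j, _, hj⟩ := Finset.mem_image.mp hq
      exact hzero_ne_one (congrArg Prod.fst hj).symm
    have hc : S.card = Q.card + A' := by
      rw [hSdef]
      rw [Finset.card_union_of_disjoint hdisj]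
      congr 1
      · exact Finset.card_image_of_injOn hinj1
      · rw [Finset.card_image_of_injOn hinj2, Finset.card_range]
    rw [hc, hQcard]
    omega
  · -- indistinguishability
    rintro ⟨α, hα1, hα2⟩
    have hmem0 : ∀ x ∈ Q, ((0 : ZMod d), (x : ZMod d)) ∈ S := by
      intro x hx
      rw [hSdef]
      exact Finset.mem_union_left _ (Finset.mem_image_of_mem _ hx)
    have hmem1 : ∀ j, j < A' → ((1 : ZMod d), ((j * B : ℕ) : ZMod d)) ∈ S := by
      intro j hj
      rw [hSdef]
      exact Finset.mem_union_right _ (Finset.mem_image_of_mem _ (Finset.mem_range.mpr hj))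
    -- constraints within level 0
    have hC1 : ∀ x ∈ Q, ∀ y ∈ Q, x ≠ y → BhF α ((y : ZMod d) - (x : ZMod d)) = 0 := by
      intro x hx y hy hxy
      have hne : ((0 : ZMod d), (x : ZMod d)) ≠ ((0 : ZMod d), (y : ZMod d)) := by
        intro hcontra
        have hv := congrArg (fun p => ZMod.val (Prod.snd p)) hcontra
        simp only at hv
        rw [ZMod.val_cast_of_lt (hQlt x hx), ZMod.val_cast_of_lt (hQlt y hy)] at hv
        exact hxy hv
      have h0' := hα2 _ (hmem0 x hx) _ (hmem0 y hy) hne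
      have h0 : ip d (pU d 0 (x : ZMod d) α) (pU d 0 (y : ZMod d) α) = 0 := h0'
      rwa [ipA] at h0
    -- cross-level constraints kill Gf everywhere
    have hGfzero : ∀ c : ZMod d, GfF α c = 0 := by
      intro c
      obtain ⟨j, i, hj, hi, hceq⟩ :
          ∃ j i : ℕ, j < A' ∧ i < B ∧ c = ((j * B : ℕ) : ZMod d) - ((i : ℕ) : ZMod d) := by
        have hr : c.val < d := ZMod.val_lt c
        have hcv : ((c.val : ℕ) : ZMod d) = c := valcast c
        rcases Nat.eq_zero_or_pos (c.val % B) with h0 | hpos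
        · refine ⟨c.val / B, 0, ?_, hBpos, ?_⟩
          · exact (Nat.div_lt_iff_lt_mul hBpos).mpr (lt_of_lt_of_le hr hdAB)
          · have hdiv : c.val / B * B = c.val := Nat.div_mul_cancel (Nat.dvd_of_mod_eq_zero h0)
            rw [hdiv, Nat.cast_zero, sub_zero, hcv]
        · have hmod := Nat.div_add_mod c.val B
          have hmlt : c.val % B < B := Nat.mod_lt _ hBpos
          by_cases hsm : c.val / B + 2 ≤ A'
          · refine ⟨c.val / B + 1, B - c.val % B, by omega, by omega, ?_⟩
            have hexp : (c.val / B + 1) * B = B * (c.val / B) + B := by ring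
            have hle : B - c.val % B ≤ (c.val / B + 1) * B := by
              generalize hX : B * (c.val / B) = X at hexp hmod
              omega
            have heq : (c.val / B + 1) * B - (B - c.val % B) = c.val := by
              generalize hX : B * (c.val / B) = X at hexp hmod
              generalize hY : (c.val / B + 1) * B = Y at hexp ⊢
              omega
            have hcs : (((c.val / B + 1) * B - (B - c.val % B) : ℕ) : ZMod d)
                = ((((c.val / B + 1) * B : ℕ) : ZMod d)) - ((B - c.val % B : ℕ) : ZMod d) :=
              Nat.cast_sub hle
            rw [← hcs, heq, hcv]
          · refine ⟨0, d - c.val, by omega, ?_, ?_⟩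
            · have h1 : A' ≤ c.val / B + 1 := by omega
              have h2 : A' * B ≤ (c.val / B + 1) * B := Nat.mul_le_mul_right _ h1
              have hexp : (c.val / B + 1) * B = B * (c.val / B) + B := by ring
              generalize hX : B * (c.val / B) = X at hexp hmod
              generalize hY : (c.val / B + 1) * B = Y at hexp h2
              generalize hZ : A' * B = Z at h2 hdAB
              omega
            · have hcast : ((d - c.val : ℕ) : ZMod d) = - ((c.val : ℕ) : ZMod d) := by
                rw [Nat.cast_sub (le_of_lt hr), ZMod.natCast_self, zero_sub]
              rw [Nat.zero_mul, Nat.cast_zero, hcast, hcv, sub_neg_eq_add, zero_add]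
      have hiQ : i ∈ Q := by
        rw [hQdef]
        exact Finset.mem_union_left _ (Finset.mem_range.mpr hi)
      have hne : ((0 : ZMod d), ((i : ℕ) : ZMod d)) ≠ ((1 : ZMod d), ((j * B : ℕ) : ZMod d)) := by
        intro hcontra
        exact hzero_ne_one (congrArg Prod.fst hcontra)
      have h0' := hα2 _ (hmem0 i hiQ) _ (hmem1 j hj) hne
      have h0 : ip d (pU d 0 ((i : ℕ) : ZMod d) α) (pU d 1 ((j * B : ℕ) : ZMod d) α) = 0 := h0'
      rw [ipB] at h0
      rcases mul_eq_zero.mp h0 with h' | h'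
      · exact absurd h' (ee_ne_zero _)
      · rw [hceq]; exact h'
    -- the Bhat vanishing on middle frequencies
    have hcov3 : ∀ r : ℕ, d / 4 + 1 ≤ r → 2 * r + 1 ≤ d → BhF α ((r : ℕ) : ZMod d) = 0 := by
      intro r h1 h2
      have hsM : r - d / 4 ≤ M := by omega
      have hs1 : 1 ≤ r - d / 4 := by omega
      set s := r - d / 4 with hs
      have hdm := Nat.div_add_mod (s - 1) B
      have hmlt : (s - 1) % B < B := Nat.mod_lt _ hBpos
      set l := (s - 1) / B with hldef
      have hexp : (l + 1) * B = B * l + B := by ring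
      have hl : l < t := by
        have h3 : B * l ≤ s - 1 := by omega
        have h4 : B * l < t * B := by
          have : B * l < M := by omega
          exact lt_of_lt_of_le this ht1
        have h5 : B * l < B * t := by
          rw [mul_comm B t]; exact h4
        exact lt_of_mul_lt_mul_left h5 (Nat.zero_le B)
      have hsle : s ≤ (l + 1) * B := by
        generalize hX : B * l = X at hexp hdm
        omega
      have hilt : (l + 1) * B - s < B := by
        generalize hX : B * l = X at hexp hdm
        generalize hY : (l + 1) * B = Y at hexp ⊢
        omega
      set i := (l + 1) * B - s with hidef
      have hx'Q : d / 4 + (l + 1) * B ∈ Q := by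
        rw [hQdef]
        exact Finset.mem_union_right _
          (Finset.mem_image_of_mem _ (Finset.mem_range.mpr hl))
      have hiQ : i ∈ Q := by
        rw [hQdef]
        exact Finset.mem_union_left _ (Finset.mem_range.mpr (by omega))
      have hne : i ≠ d / 4 + (l + 1) * B := by
        have := hQge l
        omega
      have hBh := hC1 i hiQ (d / 4 + (l + 1) * B) hx'Q hne
      have hle2 : i ≤ d / 4 + (l + 1) * B := by
        generalize hY : (l + 1) * B = Y at hidef ⊢
        omega
      have heq : d / 4 + (l + 1) * B - i = r := by
        generalize hY : (l + 1) * B = Y at hidef hsle ⊢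
        omega
      rwa [← Nat.cast_sub hle2, heq] at hBh
    have hBz : ∀ c : ZMod d, (ee d (-c)).re < 0 → BhF α c = 0 := by
      intro c hc
      obtain ⟨hr1, hr2⟩ := val_range_of_re_neg hd c hc
      rcases le_or_gt (2 * c.val + 1) d with hhalf | hhalf
      · have h3 := hcov3 c.val hr1 hhalf
        rwa [valcast] at h3
      · have h1 : d / 4 + 1 ≤ d - c.val := by omega
        have h2 : 2 * (d - c.val) + 1 ≤ d := by omega
        have h3 := hcov3 (d - c.val) h1 h2
        have h4 : ((d - c.val : ℕ) : ZMod d) = -c := by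
          rw [Nat.cast_sub (le_of_lt (ZMod.val_lt c)), ZMod.natCast_self, zero_sub, valcast]
        rw [h4] at h3
        rw [← Bh_neg α c, h3, map_zero]
    exact final_contra α hα1 (gg_zero α hGfzero) hBz
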